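/- The logarithmic coherence number is monotone under incoherent operations: let Λ be a completely positive trace-preserving map on d×d complex matrices admitting a Kraus representation Λ(ρ) = Σ_n K_n ρ K_n† in which every Kraus operator K_n is incoherent. Then for every density matrix ρ on ℂ^d, L_C(Λ(ρ)) ≤ L_C(ρ). -/

import Mathlib

open scoped BigOperators ComplexOrder Matrix

open Classical in
/-- Coherence rank: number of nonzero coordinates in the fixed basis. -/
noncomputable def cohRank {ι : Type*} [Fintype ι] (ψ : ι → ℂ) : ℕ :=
  (Finset.univ.filter fun i => ψ i ≠ 0).card

/-- Logarithmic coherence rank. -/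
noncomputable def logCohRank {ι : Type*} [Fintype ι] (ψ : ι → ℂ) : ℝ :=
  Real.logb 2 (cohRank ψ)

/-- A density matrix: positive semidefinite with trace one. -/
def IsDensity {ι : Type*} [Fintype ι] (ρ : Matrix ι ι ℂ) : Prop :=
  ρ.PosSemidef ∧ ρ.trace = 1

/-- A pure-state decomposition ρ = ∑ pᵢ |ψᵢ⟩⟨ψᵢ| with pᵢ > 0, ∑ pᵢ = 1 and ψᵢ unit vectors. -/
def IsDecomp {ι : Type*} [Fintype ι] (ρ : Matrix ι ι ℂ) {n : ℕ}
    (p : Fin n → ℝ) (ψ : Fin n → ι → ℂ) : Prop :=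
  (∀ i, 0 < p i) ∧ (∑ i, p i = 1) ∧ (∀ i, ∑ x, ‖ψ i x‖ ^ 2 = 1) ∧
    ρ = ∑ i, (p i : ℂ) • Matrix.vecMulVec (ψ i) (star (ψ i))

/-- Logarithmic coherence number via the convex roof construction. -/
noncomputable def logCohNum {ι : Type*} [Fintype ι] (ρ : Matrix ι ι ℂ) : ℝ :=
  sInf { x | ∃ (n : ℕ) (p : Fin n → ℝ) (ψ : Fin n → ι → ℂ),
    IsDecomp ρ p ψ ∧ x = ∑ i, p i * logCohRank (ψ i) }

/-- Logarithm of the Schmidt rank of a bipartite vector (rank of its coefficient matrix). -/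
noncomputable def logSchmidtRank {ι κ : Type*} [Fintype ι] [Fintype κ]
    (ψ : ι × κ → ℂ) : ℝ :=
  Real.logb 2 ((Matrix.of fun i j => ψ (i, j)).rank)

/-- Logarithmic Schmidt number via the convex roof construction. -/
noncomputable def logSchmidtNum {ι κ : Type*} [Fintype ι] [Fintype κ]
    (ρ : Matrix (ι × κ) (ι × κ) ℂ) : ℝ :=
  sInf { x | ∃ (n : ℕ) (p : Fin n → ℝ) (ψ : Fin n → ι × κ → ℂ),
    IsDecomp ρ p ψ ∧ x = ∑ i, p i * logSchmidtRank (ψ i) }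

/-- An incoherent Kraus operator maps diagonal matrices to diagonal matrices under δ ↦ KδK†. -/
def IsIncoherentKraus {ι : Type*} [Fintype ι] (K : Matrix ι ι ℂ) : Prop :=
  ∀ δ : Matrix ι ι ℂ, δ.IsDiag → (K * δ * Kᴴ).IsDiag


section Aux

open Classical Matrix

open scoped MatrixOrder in
noncomputable def psdSqrt {ι : Type*} [Fintype ι] [DecidableEq ι] (ρ : Matrix ι ι ℂ) :
    Matrix ι ι ℂ :=
  CFC.sqrt ρ

lemma cohRank_smul {ι : Type*} [Fintype ι] {a : ℂ} (ha : a ≠ 0) (v : ι → ℂ) :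
    cohRank (a • v) = cohRank v := by
  unfold cohRank
  congr 1
  ext i
  simp [ha]

lemma one_le_cohRank {ι : Type*} [Fintype ι] {v : ι → ℂ} (hv : v ≠ 0) : 1 ≤ cohRank v := by
  obtain ⟨x, hx⟩ := Function.ne_iff.mp hv
  have hx' : v x ≠ 0 := hx
  have : x ∈ (Finset.univ.filter fun i => v i ≠ 0) := by simp [hx']
  exact Finset.card_pos.mpr ⟨x, this⟩

lemma logCohRank_nonneg {ι : Type*} [Fintype ι] {v : ι → ℂ} (hv : v ≠ 0) : 0 ≤ logCohRank v :=
  Real.logb_nonneg one_lt_two (by exact_mod_cast one_le_cohRank hv)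

lemma logCohRank_smul {ι : Type*} [Fintype ι] {a : ℂ} (ha : a ≠ 0) (v : ι → ℂ) :
    logCohRank (a • v) = logCohRank v := by
  unfold logCohRank; rw [cohRank_smul ha]

lemma norm_sq_sum_eq {ι : Type*} [Fintype ι] (w : ι → ℂ) :
    ∑ x, ‖w x‖ ^ 2 = (star w ⬝ᵥ w).re := by
  rw [dotProduct, Complex.re_sum]
  refine Finset.sum_congr rfl fun x _ => ?_
  simp [Pi.star_apply, ← Complex.normSq_eq_norm_sq, Complex.normSq,
    Complex.normSq_apply, Complex.mul_re]

lemma vecMulVec_real_smul {ι : Type*} [Fintype ι] (r : ℝ) (u : ι → ℂ) :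
    vecMulVec ((r : ℂ) • u) (star ((r : ℂ) • u)) =
      ((r : ℂ) ^ 2) • vecMulVec u (star u) := by
  ext a b
  simp only [vecMulVec_apply, Pi.star_apply, Pi.smul_apply, smul_eq_mul, star_mul',
    Complex.star_def, Complex.conj_ofReal, Matrix.smul_apply]
  ring

lemma incoherent_col {ι : Type*} [Fintype ι] [DecidableEq ι] {K : Matrix ι ι ℂ}
    (hK : IsIncoherentKraus K) (j : ι) {a b : ι} (hab : a ≠ b) :
    K a j = 0 ∨ K b j = 0 := by
  have h := hK (diagonal (Pi.single j 1)) (isDiag_diagonal _)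
  have h2 : (K * diagonal (Pi.single j 1) * Kᴴ : Matrix ι ι ℂ) a b = 0 := h hab
  have h3 : (K * diagonal (Pi.single j 1) * Kᴴ : Matrix ι ι ℂ) a b
      = K a j * star (K b j) := by
    rw [Matrix.mul_apply]
    rw [Finset.sum_eq_single j]
    · simp [mul_diagonal, conjTranspose_apply]
    · intro c _ hc
      simp [mul_diagonal, Pi.single_apply, hc, conjTranspose_apply]
    · simp
  rw [h3] at h2
  rcases mul_eq_zero.mp h2 with h4 | h4
  · exact Or.inl h4
  · exact Or.inr (by simpa using h4)

lemma cohRank_mulVec_le {ι : Type*} [Fintype ι] [DecidableEq ι] {K : Matrix ι ι ℂ}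
    (hK : IsIncoherentKraus K) (ψ : ι → ℂ) :
    cohRank (K *ᵥ ψ) ≤ cohRank ψ := by
  classical
  unfold cohRank
  have hch : ∀ a, (K *ᵥ ψ) a ≠ 0 → ∃ j, K a j * ψ j ≠ 0 := by
    intro a ha'
    obtain ⟨j, _, hj⟩ := Finset.exists_ne_zero_of_sum_ne_zero ha'
    exact ⟨j, hj⟩
  choose f hf using fun a => hch a
  set g : ι → ι := fun a => if h : (K *ᵥ ψ) a ≠ 0 then f a h else a with hg
  refine Finset.card_le_card_of_injOn g ?_ ?_
  · intro a ha
    have ha' : (K *ᵥ ψ) a ≠ 0 := (Finset.mem_filter.mp ha).2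
    have := hf a ha'
    simp only [hg, dif_pos ha', Finset.mem_coe, Finset.mem_filter, Finset.mem_univ, true_and]
    exact fun h0 => this (by rw [h0, mul_zero])
  · intro a ha b hb hab2
    by_contra hne
    have ha' : (K *ᵥ ψ) a ≠ 0 := by simpa using ha
    have hb' : (K *ᵥ ψ) b ≠ 0 := by simpa using hb
    have hga : g a = f a ha' := dif_pos ha'
    have hgb : g b = f b hb' := dif_pos hb'
    have hj : f a ha' = f b hb' := by rw [← hga, ← hgb]; exact hab2
    rcases incoherent_col hK (f a ha') hne with h0 | h0
    · exact hf a ha' (by rw [h0, zero_mul])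
    · rw [hj] at h0
      exact hf b hb' (by rw [h0, zero_mul])

lemma conj_vecMulVec {ι : Type*} [Fintype ι] (K : Matrix ι ι ℂ) (u : ι → ℂ) :
    K * vecMulVec u (star u) * Kᴴ = vecMulVec (K *ᵥ u) (star (K *ᵥ u)) := by
  ext a b
  simp only [Matrix.mul_apply, vecMulVec_apply, Pi.star_apply, conjTranspose_apply,
    mulVec, dotProduct, star_sum, star_mul', Finset.sum_mul, Finset.mul_sum]
  refine Finset.sum_congr rfl fun e _ => Finset.sum_congr rfl fun c _ => ?_
  ring

lemma sum_normsq_mulVec {ι : Type*} [Fintype ι] [DecidableEq ι] {m : ℕ} (K : Fin m → Matrix ι ι ℂ)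
    (htp : ∑ n, (K n)ᴴ * K n = 1) (ψ : ι → ℂ) :
    ∑ n, (star (K n *ᵥ ψ) ⬝ᵥ (K n *ᵥ ψ)) = star ψ ⬝ᵥ ψ := by
  have h : ∀ n : Fin m, star (K n *ᵥ ψ) ⬝ᵥ (K n *ᵥ ψ) = star ψ ⬝ᵥ ((K n)ᴴ * K n) *ᵥ ψ := by
    intro n
    rw [star_mulVec, ← dotProduct_mulVec, mulVec_mulVec]
  rw [Finset.sum_congr rfl fun n _ => h n]
  have h2 : (∑ n, star ψ ⬝ᵥ ((K n)ᴴ * K n) *ᵥ ψ)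
      = star ψ ⬝ᵥ (∑ n, (K n)ᴴ * K n) *ᵥ ψ := by
    simp only [dotProduct, mulVec, Matrix.sum_apply, Finset.sum_mul, Finset.mul_sum]
    rw [Finset.sum_comm]
    refine Finset.sum_congr rfl fun x _ => ?_
    rw [Finset.sum_comm]
  rw [h2, htp, one_mulVec]

lemma master {ι : Type*} [Fintype ι] {κ : Type*} [Fintype κ] (ρ : Matrix ι ι ℂ)
    (w : κ → ℝ) (v : κ → ι → ℂ) (hw : ∀ k, 0 ≤ w k)
    (hsum : ∑ k, w k * ∑ x, ‖v k x‖ ^ 2 = 1)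
    (hρ : ρ = ∑ k, (w k : ℂ) • Matrix.vecMulVec (v k) (star (v k))) :
    ∃ (n : ℕ) (p : Fin n → ℝ) (ψ : Fin n → ι → ℂ), IsDecomp ρ p ψ ∧
      ∑ i, p i * logCohRank (ψ i)
        = ∑ k, (w k * ∑ x, ‖v k x‖ ^ 2) * logCohRank (v k) := by
  classical
  set nsq : κ → ℝ := fun k => ∑ x, ‖v k x‖ ^ 2 with hnsq_def
  set W : κ → ℝ := fun k => w k * nsq k with hW_def
  have hnsq0 : ∀ k, 0 ≤ nsq k := fun k => Finset.sum_nonneg fun x _ => sq_nonneg _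
  have hW0 : ∀ k, 0 ≤ W k := fun k => mul_nonneg (hw k) (hnsq0 k)
  set s : Finset κ := Finset.univ.filter fun k => W k ≠ 0 with hs_def
  set e : Fin s.card ≃ {x // x ∈ s} := s.equivFin.symm with he_def
  have hWs : ∀ k : {x // x ∈ s}, W k ≠ 0 := fun k =>
    (Finset.mem_filter.mp k.2).2
  have hnsq_pos : ∀ k : {x // x ∈ s}, 0 < nsq k := by
    intro k
    rcases lt_or_eq_of_le (hnsq0 k) with h | h
    · exact h
    · exact absurd (by rw [hW_def]; simp [← h]) (hWs k)
  have hw_pos : ∀ k : {x // x ∈ s}, 0 < w k := by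
    intro k
    rcases lt_or_eq_of_le (hw k) with h | h
    · exact h
    · exact absurd (by rw [hW_def]; simp [← h]) (hWs k)
  set r : κ → ℝ := fun k => (Real.sqrt (nsq k))⁻¹ with hr_def
  have hr_pos : ∀ k : {x // x ∈ s}, 0 < r k := fun k =>
    inv_pos.mpr (Real.sqrt_pos.mpr (hnsq_pos k))
  have hv_zero : ∀ k, k ∉ s → (w k : ℂ) • vecMulVec (v k) (star (v k)) = 0 := by
    intro k hk
    have hWk : W k = 0 := by
      by_contra h
      exact hk (Finset.mem_filter.mpr ⟨Finset.mem_univ _, h⟩)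
    rcases mul_eq_zero.mp hWk with h | h
    · rw [h]; simp
    · have hvk : v k = 0 := by
        funext x
        have := (Finset.sum_eq_zero_iff_of_nonneg (fun x _ => sq_nonneg ‖v k x‖)).mp h x
          (Finset.mem_univ x)
        simpa [pow_eq_zero_iff] using this
      ext a b
      simp [hvk, vecMulVec_apply]
  refine ⟨s.card, fun j => W (e j), fun j => ((r (e j) : ℂ)) • v (e j), ⟨?_, ?_, ?_, ?_⟩, ?_⟩
  · intro j
    exact lt_of_le_of_ne (hW0 _) (Ne.symm (hWs (e j)))
  · calc ∑ j, W (e j) = ∑ k : {x // x ∈ s}, W k :=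
        Fintype.sum_equiv e _ _ (fun j => rfl)
    _ = ∑ k ∈ s, W k := Finset.sum_coe_sort s W
    _ = ∑ k, W k := Finset.sum_filter_ne_zero Finset.univ
    _ = 1 := hsum
  · intro j
    have h1 : ∀ x, ‖((r (e j) : ℂ)) • v (e j) x‖ ^ 2 = (r (e j)) ^ 2 * ‖v (e j) x‖ ^ 2 := by
      intro x
      rw [norm_smul]
      rw [mul_pow]
      congr 1
      rw [Complex.norm_real]
      rw [Real.norm_eq_abs, sq_abs]
    calc ∑ x, ‖((r (e j) : ℂ)) • v (e j) x‖ ^ 2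
        = ∑ x, (r (e j)) ^ 2 * ‖v (e j) x‖ ^ 2 := by
          exact Finset.sum_congr rfl fun x _ => h1 x
      _ = (r (e j)) ^ 2 * nsq (e j) := by rw [← Finset.mul_sum]
      _ = 1 := by
          rw [hr_def]
          simp only [inv_pow]
          rw [Real.sq_sqrt (hnsq0 _)]
          exact inv_mul_cancel₀ (ne_of_gt (hnsq_pos (e j)))
  · have hterm : ∀ j, (W (e j) : ℂ) • vecMulVec ((r (e j) : ℂ) • v (e j))
        (star ((r (e j) : ℂ) • v (e j)))
        = (w (e j) : ℂ) • vecMulVec (v (e j)) (star (v (e j))) := by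
      intro j
      rw [vecMulVec_real_smul, smul_smul]
      congr 1
      rw [← Complex.ofReal_pow, ← Complex.ofReal_mul]
      congr 1
      rw [hW_def, hr_def]
      simp only [inv_pow]
      rw [Real.sq_sqrt (hnsq0 _)]
      rw [mul_assoc, mul_inv_cancel₀ (ne_of_gt (hnsq_pos (e j))), mul_one]
    calc ρ = ∑ k, (w k : ℂ) • vecMulVec (v k) (star (v k)) := hρ
      _ = ∑ k ∈ s, (w k : ℂ) • vecMulVec (v k) (star (v k)) := by
          refine (Finset.sum_subset (Finset.subset_univ s) ?_).symm
          intro k _ hk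
          exact hv_zero k hk
      _ = ∑ k : {x // x ∈ s}, (w k : ℂ) • vecMulVec (v k) (star (v k)) :=
          (Finset.sum_coe_sort s (fun k => (w k : ℂ) • vecMulVec (v k) (star (v k)))).symm
      _ = ∑ j, (w (e j) : ℂ) • vecMulVec (v (e j)) (star (v (e j))) :=
          (Fintype.sum_equiv e _ _ (fun j => rfl)).symm
      _ = ∑ j, (W (e j) : ℂ) • vecMulVec ((r (e j) : ℂ) • v (e j))
            (star ((r (e j) : ℂ) • v (e j))) := by
          exact Finset.sum_congr rfl fun j _ => (hterm j).symm
  · have hlog : ∀ j, logCohRank ((r (e j) : ℂ) • v (e j)) = logCohRank (v (e j)) := by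
      intro j
      refine logCohRank_smul ?_ _
      exact_mod_cast ne_of_gt (hr_pos (e j))
    calc ∑ j, W (e j) * logCohRank ((r (e j) : ℂ) • v (e j))
        = ∑ j, W (e j) * logCohRank (v (e j)) := by
          exact Finset.sum_congr rfl fun j _ => by rw [hlog j]
      _ = ∑ k : {x // x ∈ s}, W k * logCohRank (v k) :=
          Fintype.sum_equiv e _ _ (fun j => rfl)
      _ = ∑ k ∈ s, W k * logCohRank (v k) :=
          Finset.sum_coe_sort s (fun k => W k * logCohRank (v k))
      _ = ∑ k, W k * logCohRank (v k) := by
          refine Finset.sum_subset (Finset.subset_univ s) ?_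
          intro k _ hk
          have hWk : W k = 0 := by
            by_contra h
            exact hk (Finset.mem_filter.mpr ⟨Finset.mem_univ _, h⟩)
          rw [hWk, zero_mul]

lemma exists_decomp_aux {ι : Type*} [Fintype ι] [DecidableEq ι]
    (ρ : Matrix ι ι ℂ) (hρ : IsDensity ρ) :
    ρ = ∑ j, ((1:ℝ) : ℂ) • vecMulVec (fun a => psdSqrt ρ a j) (star (fun a => psdSqrt ρ a j))
    ∧ ∑ j, (1:ℝ) * ∑ a, ‖psdSqrt ρ a j‖ ^ 2 = 1 := by
  set S := psdSqrt ρ with hS_def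
  have hH : Sᴴ = S := by
    open scoped MatrixOrder in
    exact (CFC.sqrt_nonneg ρ).posSemidef.isHermitian
  have hmul : S * S = ρ := by
    open scoped MatrixOrder in
    exact CFC.sqrt_mul_sqrt_self ρ hρ.1.nonneg
  have happ : ∀ j b : ι, S j b = star (S b j) := by
    intro j b
    conv_lhs => rw [← hH]
    rfl
  constructor
  · ext a b
    rw [Matrix.sum_apply]
    have : ρ a b = ∑ j, S a j * S j b := by rw [← hmul, Matrix.mul_apply]
    rw [this]
    refine Finset.sum_congr rfl fun j _ => ?_
    simp only [vecMulVec_apply, Pi.star_apply, Complex.ofReal_one, one_smul, Matrix.smul_apply,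
      smul_eq_mul]
    rw [happ j b, one_mul]
  · have htr : ρ.trace = ∑ j, ∑ a, ((‖S a j‖ ^ 2 : ℝ) : ℂ) := by
      rw [← hmul, Matrix.trace]
      simp only [Matrix.diag, Matrix.mul_apply]
      rw [Finset.sum_comm]
      refine Finset.sum_congr rfl fun j _ => Finset.sum_congr rfl fun a _ => ?_
      rw [happ j a]
      rw [Complex.star_def, Complex.mul_conj']
      push_cast
      rfl
    have h1 : ((∑ j, ∑ a, ‖S a j‖ ^ 2 : ℝ) : ℂ) = 1 := by
      rw [← hρ.2, htr]
      push_cast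
      rfl
    have h2 : (∑ j, ∑ a, ‖S a j‖ ^ 2 : ℝ) = 1 := Complex.ofReal_eq_one.mp h1
    simpa [one_mul] using h2

lemma decomp_value_nonneg {ι : Type*} [Fintype ι] {ρ : Matrix ι ι ℂ} {n : ℕ}
    {p : Fin n → ℝ} {ψ : Fin n → ι → ℂ} (h : IsDecomp ρ p ψ) :
    0 ≤ ∑ i, p i * logCohRank (ψ i) := by
  refine Finset.sum_nonneg fun i _ => mul_nonneg (h.1 i).le (logCohRank_nonneg ?_)
  intro h0
  have := h.2.2.1 i
  rw [h0] at this
  simp at this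

end Aux

/-- C2: monotonicity of the logarithmic coherence number under an
incoherent operation Λ(ρ) = ∑ₙ KₙρKₙ† with incoherent Kraus operators. -/
theorem logCohNum_monotone {d : ℕ} (ρ : Matrix (Fin d) (Fin d) ℂ)
    (hρ : IsDensity ρ) {m : ℕ} (K : Fin m → Matrix (Fin d) (Fin d) ℂ)
    (hinc : ∀ n, IsIncoherentKraus (K n))
    (htp : ∑ n, (K n)ᴴ * K n = 1) :
    logCohNum (∑ n, K n * ρ * (K n)ᴴ) ≤ logCohNum ρ := by
  classical
  set σ : Matrix (Fin d) (Fin d) ℂ := ∑ n, K n * ρ * (K n)ᴴ with hσ_def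
  obtain ⟨hdecρ, hsumρ⟩ := exists_decomp_aux ρ hρ
  obtain ⟨n₀, p₀, ψ₀, hdec₀, -⟩ := master ρ (fun _ => (1:ℝ))
    (fun j => fun a => psdSqrt ρ a j) (fun _ => zero_le_one) hsumρ hdecρ
  refine le_csInf ⟨_, n₀, p₀, ψ₀, hdec₀, rfl⟩ ?_
  rintro x ⟨n, p, ψ, hdec, rfl⟩
  obtain ⟨hp_pos, hp_sum, hψ_unit, hρ_eq⟩ := hdec
  have hψne : ∀ i, ψ i ≠ 0 := by
    intro i h0
    have := hψ_unit i
    rw [h0] at this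
    simp at this
  have hinner : ∀ i, ∑ a : Fin m, ∑ x, ‖(K a *ᵥ ψ i) x‖ ^ 2 = 1 := by
    intro i
    have h1 : ∀ a : Fin m, ∑ x, ‖(K a *ᵥ ψ i) x‖ ^ 2
        = (star (K a *ᵥ ψ i) ⬝ᵥ (K a *ᵥ ψ i)).re := fun a => norm_sq_sum_eq _
    rw [Finset.sum_congr rfl fun a _ => h1 a, ← Complex.re_sum,
      sum_normsq_mulVec K htp, ← norm_sq_sum_eq]
    exact hψ_unit i
  set w : Fin m × Fin n → ℝ := fun k => p k.2 with hw_def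
  set v : Fin m × Fin n → (Fin d → ℂ) := fun k => K k.1 *ᵥ ψ k.2 with hv_def
  have hw : ∀ k, 0 ≤ w k := fun k => (hp_pos k.2).le
  have hsum1 : ∑ k, w k * ∑ x, ‖v k x‖ ^ 2 = 1 := by
    rw [Fintype.sum_prod_type, Finset.sum_comm]
    calc ∑ i, ∑ a, w (a, i) * ∑ x, ‖v (a, i) x‖ ^ 2
        = ∑ i, p i * ∑ a : Fin m, ∑ x, ‖(K a *ᵥ ψ i) x‖ ^ 2 := by
          refine Finset.sum_congr rfl fun i _ => ?_
          rw [Finset.mul_sum]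
      _ = ∑ i, p i := Finset.sum_congr rfl fun i _ => by rw [hinner i, mul_one]
      _ = 1 := hp_sum
  have hσ_eq : σ = ∑ k, (w k : ℂ) • Matrix.vecMulVec (v k) (star (v k)) := by
    rw [Fintype.sum_prod_type, hσ_def]
    refine Finset.sum_congr rfl fun a _ => ?_
    rw [hρ_eq, Matrix.mul_sum, Matrix.sum_mul]
    refine Finset.sum_congr rfl fun i _ => ?_
    rw [Matrix.mul_smul, Matrix.smul_mul, conj_vecMulVec]
  obtain ⟨N, q, φ, hdec2, hval⟩ := master σ w v hw hsum1 hσ_eq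
  have hle1 : logCohNum σ ≤ ∑ j, q j * logCohRank (φ j) := by
    apply csInf_le
    · refine ⟨0, ?_⟩
      rintro y ⟨n', p', ψ', hd', rfl⟩
      exact decomp_value_nonneg hd'
    · exact ⟨N, q, φ, hdec2, rfl⟩
  rw [hval] at hle1
  refine hle1.trans ?_
  rw [Fintype.sum_prod_type, Finset.sum_comm]
  calc ∑ i, ∑ a, (w (a, i) * ∑ x, ‖v (a, i) x‖ ^ 2) * logCohRank (v (a, i))
      ≤ ∑ i, ∑ a, (w (a, i) * ∑ x, ‖v (a, i) x‖ ^ 2) * logCohRank (ψ i) := by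
        refine Finset.sum_le_sum fun i _ => Finset.sum_le_sum fun a _ => ?_
        by_cases hv0 : K a *ᵥ ψ i = 0
        · have : v (a, i) = 0 := hv0
          simp [this]
        · refine mul_le_mul_of_nonneg_left ?_
            (mul_nonneg (hp_pos i).le (Finset.sum_nonneg fun x _ => sq_nonneg _))
          unfold logCohRank
          refine (Real.logb_le_logb one_lt_two ?_ ?_).mpr ?_
          · exact_mod_cast one_le_cohRank (v := v (a, i)) hv0
          · exact_mod_cast one_le_cohRank (hψne i)
          · exact_mod_cast cohRank_mulVec_le (hinc a) (ψ i)
    _ = ∑ i, p i * logCohRank (ψ i) := by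
        refine Finset.sum_congr rfl fun i _ => ?_
        calc ∑ a, (w (a, i) * ∑ x, ‖v (a, i) x‖ ^ 2) * logCohRank (ψ i)
            = (p i * ∑ a : Fin m, ∑ x, ‖(K a *ᵥ ψ i) x‖ ^ 2) * logCohRank (ψ i) := by
              rw [Finset.mul_sum, Finset.sum_mul]
          _ = p i * logCohRank (ψ i) := by rw [hinner i, mul_one]
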